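/- Let ℓ, m ≥ 2 be integers, and let a, b ≥ 1 be odd integers with s(a) = ℓ and s(b) = m. If s(ab) = 2, then ab < 2^(2ℓm − 4). -/

import Mathlib

/-- `s n` is the number of nonzero digits (ones) in the binary expansion of `n`. -/
def s (n : ℕ) : ℕ := (Nat.digits 2 n).count 1

lemma s_zero : s 0 = 0 := by simp [s]

lemma s_step (n : ℕ) (h : n ≠ 0) : s n = s (n / 2) + n % 2 := by
  unfold s
  rw [Nat.digits_def' (by norm_num) (Nat.pos_of_ne_zero h)]
  rw [List.count_cons]
  have : n % 2 = 0 ∨ n % 2 = 1 := Nat.mod_two_eq_zero_or_one n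
  rcases this with h1 | h1 <;> simp [h1]

lemma s_two_mul (n : ℕ) : s (2 * n) = s n := by
  rcases Nat.eq_zero_or_pos n with h | h
  · simp [h]
  · rw [s_step (2 * n) (by omega)]
    simp [Nat.mul_div_cancel_left, Nat.mul_mod_right]

lemma s_two_mul_add_one (n : ℕ) : s (2 * n + 1) = s n + 1 := by
  rw [s_step (2 * n + 1) (by omega)]
  have h1 : (2 * n + 1) / 2 = n := by omega
  have h2 : (2 * n + 1) % 2 = 1 := by omega
  rw [h1, h2]

lemma s_one : s 1 = 1 := by
  have := s_two_mul_add_one 0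
  simpa [s_zero] using this

lemma s_even {w : ℕ} (h : w % 2 = 0) : s w = s (w / 2) := by
  have : w = 2 * (w / 2) := by omega
  conv_lhs => rw [this]
  rw [s_two_mul]

lemma s_odd {w : ℕ} (h : w % 2 = 1) : s w = s (w / 2) + 1 := by
  have : w = 2 * (w / 2) + 1 := by omega
  conv_lhs => rw [this]
  rw [s_two_mul_add_one]

/-- F2: splitting at a bit boundary -/
lemma s_split (g : ℕ) : ∀ y r : ℕ, r < 2 ^ g → s (2 ^ g * y + r) = s y + s r := by
  induction g with
  | zero => intro y r hr; interval_cases r; simp [s_zero]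
  | succ g ih =>
    intro y r hr
    have hpow : 2 ^ (g + 1) = 2 * 2 ^ g := by ring
    have hr2 : r / 2 < 2 ^ g := by omega
    have hyy : 2 ^ (g + 1) * y = 2 * (2 ^ g * y) := by rw [hpow]; ring
    have key : 2 ^ (g + 1) * y + r = 2 * (2 ^ g * y + r / 2) + r % 2 := by omega
    have hmod : (2 ^ (g + 1) * y + r) % 2 = r % 2 := by omega
    have hdiv : (2 ^ (g + 1) * y + r) / 2 = 2 ^ g * y + r / 2 := by omega
    rcases Nat.mod_two_eq_zero_or_one r with h1 | h1
    · rw [s_even (by omega), hdiv, ih y (r / 2) hr2, s_even h1]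
    · rw [s_odd (by omega), hdiv, ih y (r / 2) hr2, s_odd h1]
      omega

/-- F3: complement within an all-ones block -/
lemma s_compl (g : ℕ) : ∀ w : ℕ, w < 2 ^ g → s (2 ^ g - 1 - w) + s w = g := by
  induction g with
  | zero => intro w hw; interval_cases w; simp [s_zero]
  | succ g ih =>
    intro w hw
    have hpow : 2 ^ (g + 1) = 2 * 2 ^ g := by ring
    have hw2 : w / 2 < 2 ^ g := by omega
    have ihw := ih (w / 2) hw2
    rcases Nat.mod_two_eq_zero_or_one w with h1 | h1
    · have e2 : 2 ^ (g + 1) - 1 - w = 2 * (2 ^ g - 1 - w / 2) + 1 := by omega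
      rw [e2, s_two_mul_add_one, s_even h1]
      omega
    · have e2 : 2 ^ (g + 1) - 1 - w = 2 * (2 ^ g - 1 - w / 2) := by omega
      rw [e2, s_two_mul, s_odd h1]
      omega
/-- Binary representation as a Finset of bit positions -/
lemma bits_sum_card (k : ℕ) : ∀ x : ℕ, x < 2 ^ k →
    (∑ i ∈ Finset.range k, if x.testBit i then 2 ^ i else 0) = x ∧
    (∑ i ∈ Finset.range k, if x.testBit i then 1 else 0) = s x := by
  induction k with
  | zero =>
    intro x hx
    have : x = 0 := by simpa using hx
    subst this
    simp [s_zero]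
  | succ k ih =>
    intro x hx
    have hx2 : x / 2 < 2 ^ k := by
      have : 2 ^ (k + 1) = 2 * 2 ^ k := by ring
      omega
    obtain ⟨ih1, ih2⟩ := ih (x / 2) hx2
    have hb0 : (x.testBit 0 = true) ↔ x % 2 = 1 := by
      rw [Nat.testBit_eq_decide_div_mod_eq]
      simp
    constructor
    · rw [Finset.sum_range_succ']
      have : ∀ i, (if x.testBit (i + 1) then 2 ^ (i + 1) else 0)
          = 2 * (if (x / 2).testBit i then 2 ^ i else 0) := by
        intro i
        rw [Nat.testBit_add_one]
        split <;> ring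
      rw [Finset.sum_congr rfl (fun i _ => this i), ← Finset.mul_sum, ih1]
      rcases Nat.mod_two_eq_zero_or_one x with h1 | h1
      · have hnb : ¬ (x.testBit 0 = true) := by rw [hb0]; omega
        rw [if_neg hnb]
        omega
      · have : x.testBit 0 = true := hb0.mpr h1
        rw [if_pos this, pow_zero]
        omega
    · rw [Finset.sum_range_succ']
      have : ∀ i, (if x.testBit (i + 1) then (1:ℕ) else 0)
          = (if (x / 2).testBit i then 1 else 0) := by
        intro i; rw [Nat.testBit_add_one]
      rw [Finset.sum_congr rfl (fun i _ => this i), ih2]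
      rcases Nat.mod_two_eq_zero_or_one x with h1 | h1
      · have hb : ¬ (x.testBit 0 = true) := by rw [hb0]; omega
        rcases Nat.eq_zero_or_pos x with rfl | hxpos
        · simp [s_zero, if_neg hb, s_zero]
        · rw [if_neg hb, s_step x (by omega), h1]
      · have hb : x.testBit 0 = true := hb0.mpr h1
        rw [if_pos hb, s_step x (by omega), h1]

lemma bits_repr (k x : ℕ) (hx : x < 2 ^ k) :
    (∑ i ∈ (Finset.range k).filter (x.testBit ·), 2 ^ i) = x ∧
    ((Finset.range k).filter (x.testBit ·)).card = s x := by
  obtain ⟨h1, h2⟩ := bits_sum_card k x hx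
  constructor
  · rw [Finset.sum_filter]; exact h1
  · rw [Finset.card_filter]; exact h2

lemma testBit_zero_of_odd {x : ℕ} (h : x % 2 = 1) : x.testBit 0 = true := by
  rw [Nat.testBit_eq_decide_div_mod_eq]; simpa using h

lemma div_pow_of_even_add_one {x e : ℕ} (hx : x % 2 = 0) (he : 1 ≤ e) :
    (x + 1) / 2 ^ e = x / 2 ^ e := by
  have hpos : 0 < 2 ^ e := (pow_pos (by norm_num : (0:ℕ) < 2) e)
  have hdvd : (2:ℕ) ∣ 2 ^ e := dvd_pow_self 2 (by omega)
  have hm : x % 2 ^ e % 2 = x % 2 := Nat.mod_mod_of_dvd x hdvd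
  have h1 := Nat.div_add_mod x (2 ^ e)
  have h2 : x % 2 ^ e < 2 ^ e := Nat.mod_lt x hpos
  have h3 : x % 2 ^ e + 1 < 2 ^ e := by
    have : 2 ^ e % 2 = 0 := Nat.mod_eq_zero_of_dvd hdvd
    omega
  have : x + 1 = (x % 2 ^ e + 1) + 2 ^ e * (x / 2 ^ e) := by omega
  rw [this, Nat.add_mul_div_left _ _ hpos, Nat.div_eq_of_lt h3, zero_add]

lemma testBit_even_add_one {x e : ℕ} (hx : x % 2 = 0) (he : 1 ≤ e) :
    (x + 1).testBit e = x.testBit e := by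
  rw [Nat.testBit_eq_decide_div_mod_eq, Nat.testBit_eq_decide_div_mod_eq, div_pow_of_even_add_one hx he]

lemma testBit_mul_pow_lt {g x e : ℕ} (he : e < g) : (2 ^ g * x).testBit e = false := by
  rw [Nat.testBit_eq_decide_div_mod_eq]
  have : 2 ^ g * x = 2 ^ e * (2 * (2 ^ (g - e - 1) * x)) := by
    rw [← mul_assoc, ← mul_assoc, ← pow_succ, ← pow_add]
    congr 2
    omega
  rw [this, Nat.mul_div_cancel_left _ ((pow_pos (by norm_num : (0:ℕ) < 2) e))]
  simp [Nat.mul_mod_right]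
/-- Step 3 core: a sum of K powers of two, all exponents ≥ h with h attained,
    equal to 2^N forces N + 1 ≤ h + K. -/
lemma merge_lemma : ∀ K : ℕ, ∀ (l : Multiset ℕ) (h N : ℕ), l.card = K →
    h ∈ l → (∀ e ∈ l, h ≤ e) → (l.map (2 ^ ·)).sum = 2 ^ N → N + 1 ≤ h + K := by
  intro K
  induction K using Nat.strong_induction_on with
  | _ K ih =>
    intro l h N hcard hmem hle hsum
    set μ := l.count h with hμdef
    have hμ1 : 1 ≤ μ := Multiset.one_le_count_iff_mem.mpr hmem
    set l₂ := l.filter (fun x => ¬ x = h) with hl₂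
    have hsplit : l = Multiset.replicate μ h + l₂ := by
      rw [hμdef, ← Multiset.filter_eq' l h, hl₂]
      exact (Multiset.filter_add_not _ l).symm
    have hl₂mem : ∀ e ∈ l₂, h + 1 ≤ e := by
      intro e he
      have h1 := Multiset.mem_filter.mp he
      have := hle e h1.1
      have h2 : ¬ e = h := by simpa using h1.2
      omega
    have hsum2 : μ * 2 ^ h + (l₂.map (2 ^ ·)).sum = 2 ^ N := by
      rw [hsplit] at hsum
      rw [Multiset.map_add, Multiset.sum_add, Multiset.map_replicate,
        Multiset.sum_replicate] at hsum
      simpa [nsmul_eq_mul] using hsum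
    have hdvd : 2 ^ (h + 1) ∣ (l₂.map (2 ^ ·)).sum := by
      apply Multiset.dvd_sum
      intro x hx
      obtain ⟨e, he, rfl⟩ := Multiset.mem_map.mp hx
      exact pow_dvd_pow 2 (hl₂mem e he)
    have hcard2 : μ + l₂.card = K := by
      rw [hsplit] at hcard
      simpa [Multiset.card_replicate] using hcard
    rcases le_or_gt N h with hNh | hNh
    · -- then N = h, μ = 1, l₂ = 0
      have hpow : (2:ℕ) ^ N ≤ 2 ^ h := Nat.pow_le_pow_right (by norm_num) hNh
      have hl₂0 : l₂ = 0 := by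
        by_contra h0
        obtain ⟨e, he⟩ := Multiset.exists_mem_of_ne_zero h0
        have : 2 ^ e ≤ (l₂.map (2 ^ ·)).sum :=
          Multiset.single_le_sum (by intro x hx; positivity) _
            (Multiset.mem_map_of_mem _ he)
        have hepos : (0:ℕ) < 2 ^ e := (pow_pos (by norm_num : (0:ℕ) < 2) e)
        have := (pow_pos (by norm_num : (0:ℕ) < 2) h)
        nlinarith [(pow_pos (by norm_num : (0:ℕ) < 2) h)]
      rw [hl₂0] at hsum2
      simp at hsum2
      have hNeq : N = h := by
        by_contra hne
        have hN1 : N + 1 ≤ h := by omega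
        have : 2 * 2 ^ N ≤ 2 ^ h := by
          calc 2 * 2 ^ N = 2 ^ (N + 1) := by ring
          _ ≤ 2 ^ h := Nat.pow_le_pow_right (by norm_num) hN1
        have hh : 2 ^ h ≤ μ * 2 ^ h := Nat.le_mul_of_pos_left _ (by omega)
        omega
      have hμeq : μ = 1 := by
        subst hNeq
        have := (pow_pos (by norm_num : (0:ℕ) < 2) N)
        nlinarith
      have : l₂.card = 0 := by rw [hl₂0]; simp
      omega
    · -- N ≥ h + 1 : μ even, merge
      have hdvd2 : 2 ^ (h + 1) ∣ μ * 2 ^ h := by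
        have h1 : 2 ^ (h + 1) ∣ 2 ^ N := pow_dvd_pow 2 (by omega)
        have h2 : μ * 2 ^ h = 2 ^ N - (l₂.map (2 ^ ·)).sum := by omega
        rw [h2]
        exact Nat.dvd_sub h1 hdvd
      have hμeven : 2 ∣ μ := by
        obtain ⟨c, hc⟩ := hdvd2
        have hp : 0 < 2 ^ h := (pow_pos (by norm_num : (0:ℕ) < 2) h)
        have : μ * 2 ^ h = 2 * c * 2 ^ h := by
          rw [hc, pow_succ]; ring
        exact ⟨c, by exact Nat.eq_of_mul_eq_mul_right hp this⟩
      obtain ⟨μ', hμ'⟩ := hμeven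
      have hμ'1 : 1 ≤ μ' := by omega
      set l' := Multiset.replicate μ' (h + 1) + l₂ with hl'
      have hcard' : l'.card = K - μ' := by
        rw [hl']
        simp [Multiset.card_replicate]
        omega
      have hmem' : (h + 1) ∈ l' := by
        rw [hl']
        apply Multiset.mem_add.mpr
        left
        exact Multiset.mem_replicate.mpr ⟨by omega, rfl⟩
      have hle' : ∀ e ∈ l', h + 1 ≤ e := by
        intro e he
        rcases Multiset.mem_add.mp he with h1 | h1
        · rw [Multiset.eq_of_mem_replicate h1]
        · exact hl₂mem e h1
      have hsum' : (l'.map (2 ^ ·)).sum = 2 ^ N := by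
        rw [hl', Multiset.map_add, Multiset.sum_add, Multiset.map_replicate,
          Multiset.sum_replicate, nsmul_eq_mul, Nat.cast_id]
        have : μ' * 2 ^ (h + 1) = μ * 2 ^ h := by
          rw [hμ', pow_succ]; ring
        omega
      have hKlt : K - μ' < K := by omega
      have := ih (K - μ') hKlt l' (h + 1) N hcard' hmem' hle' hsum'
      omega
/-- An odd number with exactly two binary ones is 2^n + 1. -/
lemma eq_two_pow_add_one_of_s_eq_two {x : ℕ} (hodd : x % 2 = 1) (hs : s x = 2) :
    ∃ n, 1 ≤ n ∧ x = 2 ^ n + 1 := by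
  have hxpos : 0 < x := by omega
  have hxlt : x < 2 ^ x := Nat.lt_two_pow_self
  obtain ⟨hsum, hcard⟩ := bits_repr x x hxlt
  set A := (Finset.range x).filter (x.testBit ·) with hA
  have h0A : 0 ∈ A := by
    rw [hA, Finset.mem_filter]
    exact ⟨Finset.mem_range.mpr hxpos, testBit_zero_of_odd hodd⟩
  have hcard1 : (A.erase 0).card = 1 := by
    rw [Finset.card_erase_of_mem h0A, hcard, hs]
  obtain ⟨nn, hnn⟩ := Finset.card_eq_one.mp hcard1
  have hnn0 : nn ≠ 0 := by
    intro h
    have : nn ∈ A.erase 0 := by rw [hnn]; exact Finset.mem_singleton_self nn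
    exact (Finset.ne_of_mem_erase this) h
  have hAeq : A = insert 0 (A.erase 0) := (Finset.insert_erase h0A).symm
  have hxval : x = 2 ^ 0 + 2 ^ nn := by
    rw [← hsum, hAeq, Finset.sum_insert (Finset.notMem_erase 0 A), hnn,
      Finset.sum_singleton]
  exact ⟨nn, by omega, by rw [hxval, pow_zero]; omega⟩

/-- nonzero bits of 2^g * x' + 1 are at positions ≥ g -/
lemma bit_ge_g {x x' g e : ℕ} (hg : 1 ≤ g) (hx : x = 2 ^ g * x' + 1)
    (he : x.testBit e = true) (hne : e ≠ 0) : g ≤ e := by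
  by_contra hlt
  push_neg at hlt
  have hev : (2 ^ g * x') % 2 = 0 := by
    have h2 : 2 ^ g = 2 * 2 ^ (g - 1) := by
      rw [← pow_succ']
      congr 1
      omega
    have : 2 ^ g * x' = 2 * (2 ^ (g - 1) * x') := by rw [h2]; ring
    omega
  have h1 : x.testBit e = (2 ^ g * x').testBit e := by
    rw [hx]
    exact testBit_even_add_one hev (by omega)
  rw [h1, testBit_mul_pow_lt hlt] at he
  exact Bool.false_ne_true he

lemma bit_g_true {x x' g : ℕ} (hg : 1 ≤ g) (hodd : x' % 2 = 1)
    (hx : x = 2 ^ g * x' + 1) : x.testBit g = true := by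
  have hev : (2 ^ g * x') % 2 = 0 := by
    have h2 : 2 ^ g = 2 * 2 ^ (g - 1) := by
      rw [← pow_succ']; congr 1; omega
    have : 2 ^ g * x' = 2 * (2 ^ (g - 1) * x') := by rw [h2]; ring
    omega
  have h1 : x.testBit g = (2 ^ g * x').testBit g := by
    rw [hx]; exact testBit_even_add_one hev hg
  rw [h1, Nat.testBit_eq_decide_div_mod_eq,
    Nat.mul_div_cancel_left x' ((pow_pos (by norm_num : (0:ℕ) < 2) g))]
  simpa using hodd

/-- Step 1 helper: impossible that the 2-adic valuations differ -/
lemma val_ne_impossible {i j a' b' n : ℕ} (ha : a' % 2 = 1) (hb : b' % 2 = 1)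
    (hij : i < j)
    (heq : 2 ^ i * a' + 2 ^ j * b' + 2 ^ i * a' * (2 ^ j * b') = 2 ^ n) : False := by
  set T := a' + 2 ^ (j - i) * b' + 2 ^ j * (a' * b') with hT
  have hfact : 2 ^ i * T = 2 ^ n := by
    rw [hT]
    have h1 : 2 ^ i * 2 ^ (j - i) = 2 ^ j := by
      rw [← pow_add]; congr 1; omega
    calc 2 ^ i * (a' + 2 ^ (j - i) * b' + 2 ^ j * (a' * b'))
        = 2 ^ i * a' + (2 ^ i * 2 ^ (j - i)) * b' + 2 ^ i * a' * (2 ^ j * b') := by ring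
      _ = 2 ^ n := by rw [h1]; exact heq
  have hin : i ≤ n := by
    by_contra hc
    push_neg at hc
    have h1 : 2 ^ n < 2 ^ i := Nat.pow_lt_pow_right (by norm_num) hc
    have hTpos : 0 < T := by omega
    have h2 : 2 ^ i ≤ 2 ^ i * T := Nat.le_mul_of_pos_right _ hTpos
    omega
  have hTval : T = 2 ^ (n - i) := by
    have h1 : 2 ^ n = 2 ^ i * 2 ^ (n - i) := by rw [← pow_add]; congr 1; omega
    rw [h1] at hfact
    exact Nat.eq_of_mul_eq_mul_left ((pow_pos (by norm_num : (0:ℕ) < 2) i)) hfact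
  have hTodd : T % 2 = 1 := by
    have h1 : (2 ^ (j - i) * b') % 2 = 0 := by
      have : 2 ^ (j - i) = 2 * 2 ^ (j - i - 1) := by
        rw [← pow_succ']; congr 1; omega
      have h2 : 2 ^ (j - i) * b' = 2 * (2 ^ (j - i - 1) * b') := by rw [this]; ring
      omega
    have h2 : (2 ^ j * (a' * b')) % 2 = 0 := by
      have : 2 ^ j = 2 * 2 ^ (j - 1) := by
        rw [← pow_succ']; congr 1; omega
      have h3 : 2 ^ j * (a' * b') = 2 * (2 ^ (j - 1) * (a' * b')) := by rw [this]; ring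
      omega
    omega
  have hTbig : 3 ≤ T := by
    have h1 : 1 ≤ a' := by omega
    have h2 : 1 ≤ b' := by omega
    have h3 : 2 ≤ 2 ^ (j - i) := by
      calc (2:ℕ) = 2 ^ 1 := by norm_num
      _ ≤ 2 ^ (j - i) := Nat.pow_le_pow_right (by norm_num) (by omega)
    have h4 : 2 * 1 ≤ 2 ^ (j - i) * b' := Nat.mul_le_mul h3 h2
    omega
  -- T = 2^(n-i) odd and ≥ 3 : impossible
  rcases Nat.eq_zero_or_pos (n - i) with h | h
  · rw [h, pow_zero] at hTval; omega
  · have : 2 ^ (n - i) % 2 = 0 := by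
      have : 2 ^ (n - i) = 2 * 2 ^ (n - i - 1) := by
        rw [← pow_succ']; congr 1; omega
      omega
    omega
/-- Step 2: complementary low windows force g ≤ ℓ + m - 3. -/
lemma window_bound {g a' b' n : ℕ} (hg : 1 ≤ g) (ha : a' % 2 = 1) (hb : b' % 2 = 1)
    (heq : 2 ^ g * a' + 2 ^ g * b' + 2 ^ g * a' * (2 ^ g * b') = 2 ^ n) :
    g + 3 ≤ s (2 ^ g * a' + 1) + s (2 ^ g * b' + 1) ∧ 2 * g + 1 ≤ n := by
  have hpos : (0:ℕ) < 2 ^ g := (pow_pos (by norm_num : (0:ℕ) < 2) g)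
  have h2g : 2 ^ g * a' * (2 ^ g * b') = 2 ^ (2 * g) * (a' * b') := by
    rw [two_mul, pow_add]; ring
  have hn2g : 2 * g + 1 ≤ n := by
    have ha1 : 1 ≤ a' := by omega
    have hb1 : 1 ≤ b' := by omega
    have hab1 : 1 ≤ a' * b' := by
      calc (1:ℕ) = 1 * 1 := by ring
      _ ≤ a' * b' := Nat.mul_le_mul ha1 hb1
    have h1 : 2 ^ (2 * g) * 1 ≤ 2 ^ (2 * g) * (a' * b') :=
      Nat.mul_le_mul_left _ hab1
    have h2 : 2 ^ (2 * g) < 2 ^ n := by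
      have h3 : 0 < 2 ^ g * a' := Nat.mul_pos hpos (by omega)
      omega
    have := (Nat.pow_lt_pow_iff_right (a := 2) (by norm_num)).mp h2
    omega
  have key : a' + b' + 2 ^ g * (a' * b') = 2 ^ (n - g) := by
    have h1 : 2 ^ n = 2 ^ g * 2 ^ (n - g) := by rw [← pow_add]; congr 1; omega
    have h2 : 2 ^ g * (a' + b' + 2 ^ g * (a' * b')) = 2 ^ g * 2 ^ (n - g) := by
      rw [← h1, ← heq, h2g, two_mul, pow_add]; ring
    exact Nat.eq_of_mul_eq_mul_left hpos h2
  have hdvd : 2 ^ g ∣ a' + b' := by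
    have h1 : a' + b' = 2 ^ (n - g) - 2 ^ g * (a' * b') := by omega
    rw [h1]
    exact Nat.dvd_sub (pow_dvd_pow 2 (by omega)) (dvd_mul_right _ _)
  set u := a' % 2 ^ g with hu
  set w := b' % 2 ^ g with hw
  have hult : u < 2 ^ g := Nat.mod_lt _ hpos
  have hwlt : w < 2 ^ g := Nat.mod_lt _ hpos
  have h2dvd : (2:ℕ) ∣ 2 ^ g := dvd_pow_self 2 (by omega)
  have huodd : u % 2 = 1 := by rw [hu, Nat.mod_mod_of_dvd _ h2dvd]; exact ha
  have hwodd : w % 2 = 1 := by rw [hw, Nat.mod_mod_of_dvd _ h2dvd]; exact hb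
  have huw : u + w = 2 ^ g := by
    have h1 : (a' + b') % 2 ^ g = 0 := Nat.mod_eq_zero_of_dvd hdvd
    have h2 : (u + w) % 2 ^ g = 0 := by
      rw [hu, hw, ← Nat.add_mod, h1]
    obtain ⟨q, hq⟩ : 2 ^ g ∣ u + w := Nat.dvd_of_mod_eq_zero h2
    match q, hq with
    | 0, hq => omega
    | 1, hq => omega
    | (q + 2), hq =>
      exfalso
      have : 2 ^ g * 2 ≤ 2 ^ g * (q + 2) := Nat.mul_le_mul_left _ (by omega)
      omega
  have h1lt : (1:ℕ) < 2 ^ g := Nat.one_lt_two_pow (by omega)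
  have hsa : s (2 ^ g * a' + 1) = s a' + 1 := by
    rw [s_split g a' 1 h1lt, s_one]
  have hsb : s (2 ^ g * b' + 1) = s b' + 1 := by
    rw [s_split g b' 1 h1lt, s_one]
  have hsa' : s a' = s (a' / 2 ^ g) + s u := by
    conv_lhs => rw [show a' = 2 ^ g * (a' / 2 ^ g) + u from by rw [hu]; exact (Nat.div_add_mod a' (2 ^ g)).symm]
    exact s_split g _ _ hult
  have hsb' : s b' = s (b' / 2 ^ g) + s w := by
    conv_lhs => rw [show b' = 2 ^ g * (b' / 2 ^ g) + w from by rw [hw]; exact (Nat.div_add_mod b' (2 ^ g)).symm]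
    exact s_split g _ _ hwlt
  have hsu : s u = s (u - 1) + 1 := by
    rw [s_odd huodd, s_even (show (u-1) % 2 = 0 by omega)]
    congr 2
    omega
  have hcompl : s (2 ^ g - 1 - (u - 1)) + s (u - 1) = g := s_compl g (u - 1) (by omega)
  have hweq : w = 2 ^ g - 1 - (u - 1) := by omega
  constructor
  · have hsw : s w + s (u - 1) = g := by rw [hweq]; exact hcompl
    omega
  · exact hn2g
theorem products_few_digits_k2 (ℓ m : ℕ) (hℓ : 2 ≤ ℓ) (hm : 2 ≤ m)
    (a b : ℕ) (ha : 1 ≤ a) (hb : 1 ≤ b) (hoa : Odd a) (hob : Odd b)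
    (hsa : s a = ℓ) (hsb : s b = m) (hsab : s (a * b) = 2) :
    a * b < 2 ^ (2 * ℓ * m - 4) := by
  have hamod : a % 2 = 1 := Nat.odd_iff.mp hoa
  have hbmod : b % 2 = 1 := Nat.odd_iff.mp hob
  have habmod : (a * b) % 2 = 1 := by
    rw [Nat.mul_mod, hamod, hbmod]
  obtain ⟨n, hn1, hab⟩ := eq_two_pow_add_one_of_s_eq_two habmod hsab
  have ha3 : 3 ≤ a := by
    rcases Nat.lt_or_ge a 3 with h | h
    · interval_cases a
      · simp [s_one] at hsa; omega
      · omega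
    · exact h
  have hb3 : 3 ≤ b := by
    rcases Nat.lt_or_ge b 3 with h | h
    · interval_cases b
      · simp [s_one] at hsb; omega
      · omega
    · exact h
  obtain ⟨i, a', ha'nd, hA⟩ :=
    Nat.exists_eq_pow_mul_and_not_dvd (show a - 1 ≠ 0 by omega) 2 (by norm_num)
  obtain ⟨j, b', hb'nd, hB⟩ :=
    Nat.exists_eq_pow_mul_and_not_dvd (show b - 1 ≠ 0 by omega) 2 (by norm_num)
  have ha'odd : a' % 2 = 1 := by
    rcases Nat.mod_two_eq_zero_or_one a' with h | h
    · exact absurd (Nat.dvd_of_mod_eq_zero h) ha'nd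
    · exact h
  have hb'odd : b' % 2 = 1 := by
    rcases Nat.mod_two_eq_zero_or_one b' with h | h
    · exact absurd (Nat.dvd_of_mod_eq_zero h) hb'nd
    · exact h
  have hkey : (a - 1) + (b - 1) + (a - 1) * (b - 1) = 2 ^ n := by
    obtain ⟨A, rfl⟩ : ∃ A, a = A + 1 := ⟨a - 1, by omega⟩
    obtain ⟨B, rfl⟩ : ∃ B, b = B + 1 := ⟨b - 1, by omega⟩
    have h1 : (A + 1) * (B + 1) = A * B + A + B + 1 := by ring
    simp only [Nat.add_sub_cancel]
    omega
  have hkey2 : 2 ^ i * a' + 2 ^ j * b' + 2 ^ i * a' * (2 ^ j * b') = 2 ^ n := by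
    rw [← hA, ← hB]; exact hkey
  have hij : i = j := by
    rcases lt_trichotomy i j with h | h | h
    · exact absurd hkey2 (fun hk => val_ne_impossible ha'odd hb'odd h hk)
    · exact h
    · exfalso
      apply val_ne_impossible hb'odd ha'odd h
      rw [← hkey2]; ring
  subst hij
  set g := i with hgdef
  have hg1 : 1 ≤ g := by
    by_contra h
    have hg0 : g = 0 := by omega
    rw [hg0, pow_zero, one_mul] at hA
    omega
  have haeq : a = 2 ^ g * a' + 1 := by omega
  have hbeq : b = 2 ^ g * b' + 1 := by omega
  obtain ⟨hwin, h2g1⟩ := window_bound hg1 ha'odd hb'odd hkey2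
  rw [← haeq, ← hbeq, hsa, hsb] at hwin
  -- hwin : g + 3 ≤ ℓ + m, h2g1 : 2 * g + 1 ≤ n
  -- Step 3: grid multiset
  have hpn : (2:ℕ) ^ (n + 1) = 2 * 2 ^ n := by rw [pow_succ]; ring
  have h2n : 2 ≤ 2 ^ n := by
    calc (2:ℕ) = 2 ^ 1 := by norm_num
    _ ≤ 2 ^ n := Nat.pow_le_pow_right (by norm_num) hn1
  have halt : a < 2 ^ (n + 1) := by
    have h1 : a * 3 ≤ a * b := Nat.mul_le_mul_left a hb3
    omega
  have hblt : b < 2 ^ (n + 1) := by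
    have h1 : b * 3 ≤ b * a := Nat.mul_le_mul_left b ha3
    rw [mul_comm b a] at h1
    omega
  obtain ⟨hsumA, hcardA⟩ := bits_repr (n + 1) a halt
  obtain ⟨hsumB, hcardB⟩ := bits_repr (n + 1) b hblt
  set Af := (Finset.range (n + 1)).filter (a.testBit ·) with hAf
  set Bf := (Finset.range (n + 1)).filter (b.testBit ·) with hBf
  set E0 : Multiset ℕ := ((Af ×ˢ Bf).val.map (fun p => p.1 + p.2)) with hE0def
  have hsum0 : (E0.map (2 ^ ·)).sum = a * b := by
    rw [hE0def, Multiset.map_map]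
    have step : ((Af ×ˢ Bf).val.map ((2 ^ ·) ∘ (fun p : ℕ × ℕ => p.1 + p.2))).sum
        = ∑ p ∈ Af ×ˢ Bf, 2 ^ (p.1 + p.2) := rfl
    rw [step, Finset.sum_product]
    have step2 : ∀ i0 ∈ Af, ∑ j0 ∈ Bf, 2 ^ (i0 + j0) = 2 ^ i0 * ∑ j0 ∈ Bf, 2 ^ j0 := by
      intro i0 _
      rw [Finset.mul_sum]
      exact Finset.sum_congr rfl (fun j0 _ => by rw [pow_add])
    rw [Finset.sum_congr rfl step2, ← Finset.sum_mul, hsumA, hsumB]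
  have hcard0 : Multiset.card E0 = ℓ * m := by
    rw [hE0def, Multiset.card_map]
    have : ((Af ×ˢ Bf).val).card = (Af ×ˢ Bf).card := rfl
    rw [this, Finset.card_product, hcardA, hcardB, hsa, hsb]
  have h0Af : (0:ℕ) ∈ Af := by
    rw [hAf, Finset.mem_filter]
    exact ⟨Finset.mem_range.mpr (by omega), testBit_zero_of_odd hamod⟩
  have h0Bf : (0:ℕ) ∈ Bf := by
    rw [hBf, Finset.mem_filter]
    exact ⟨Finset.mem_range.mpr (by omega), testBit_zero_of_odd hbmod⟩
  have hmem0 : (0:ℕ) ∈ E0 := by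
    rw [hE0def]
    apply Multiset.mem_map.mpr
    refine ⟨(0, 0), ?_, rfl⟩
    exact Finset.mem_val.mpr (Finset.mem_product.mpr ⟨h0Af, h0Bf⟩)
  have hcount0 : E0.count 0 = 1 := by
    rw [hE0def, Multiset.count_map]
    have hfe : (Af ×ˢ Bf).val.filter (fun p : ℕ × ℕ => 0 = p.1 + p.2)
        = ((Af ×ˢ Bf).filter (fun p : ℕ × ℕ => 0 = p.1 + p.2)).val := by
      rw [Finset.filter_val]
    rw [hfe]
    have : ((Af ×ˢ Bf).filter (fun p : ℕ × ℕ => 0 = p.1 + p.2)) = {((0:ℕ), (0:ℕ))} := by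
      apply Finset.ext
      intro x
      simp only [Finset.mem_filter, Finset.mem_product, Finset.mem_singleton]
      constructor
      · rintro ⟨⟨_, _⟩, hx⟩
        have : x.1 = 0 ∧ x.2 = 0 := by omega
        exact Prod.ext this.1 this.2
      · rintro rfl
        exact ⟨⟨h0Af, h0Bf⟩, rfl⟩
    rw [this]
    exact Finset.card_singleton _
  set E : Multiset ℕ := E0.erase 0 with hEdef
  have hcons : E0 = 0 ::ₘ E := (Multiset.cons_erase hmem0).symm
  have hsumE : (E.map (2 ^ ·)).sum = 2 ^ n := by
    have h1 : (E0.map (2 ^ ·)).sum = 2 ^ 0 + (E.map (2 ^ ·)).sum := by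
      rw [hcons, Multiset.map_cons, Multiset.sum_cons]
    rw [hsum0] at h1
    rw [pow_zero] at h1
    omega
  have hcardE : Multiset.card E = ℓ * m - 1 := by
    rw [hEdef, Multiset.card_erase_of_mem hmem0, hcard0]
    rfl
  have hgn : g ≤ n := by omega
  have hgAf : g ∈ Af := by
    rw [hAf, Finset.mem_filter]
    exact ⟨Finset.mem_range.mpr (by omega), bit_g_true hg1 ha'odd haeq⟩
  have hgE0 : g ∈ E0 := by
    rw [hE0def]
    apply Multiset.mem_map.mpr
    refine ⟨(g, 0), ?_, by simp⟩
    exact Finset.mem_val.mpr (Finset.mem_product.mpr ⟨hgAf, h0Bf⟩)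
  have hgE : g ∈ E := by
    rw [hEdef]
    exact (Multiset.mem_erase_of_ne (by omega)).mpr hgE0
  have hgeE : ∀ e ∈ E, g ≤ e := by
    intro e he
    have hene : e ≠ 0 := by
      intro h0
      subst h0
      have h1 : 0 < E.count 0 := Multiset.count_pos.mpr he
      have h2 : E.count 0 = E0.count 0 - 1 := by
        rw [hEdef]; exact Multiset.count_erase_self 0 E0
      omega
    have he0 : e ∈ E0 := Multiset.mem_of_mem_erase he
    rw [hE0def] at he0
    obtain ⟨⟨p1, p2⟩, hpmem, hpe⟩ := Multiset.mem_map.mp he0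
    have hp := Finset.mem_product.mp (Finset.mem_val.mp hpmem)
    have hp1 : a.testBit p1 = true := (Finset.mem_filter.mp hp.1).2
    have hp2 : b.testBit p2 = true := (Finset.mem_filter.mp hp.2).2
    simp only at hpe
    rcases Nat.eq_zero_or_pos p1 with h1 | h1
    · have hp2ne : p2 ≠ 0 := by omega
      have := bit_ge_g hg1 hbeq hp2 hp2ne
      omega
    · have := bit_ge_g hg1 haeq hp1 (by omega)
      omega
  have hmain := merge_lemma (ℓ * m - 1) E g n hcardE hgE hgeE hsumE
  -- conclude
  have hml1 : ℓ * 2 ≤ ℓ * m := Nat.mul_le_mul_left ℓ hm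
  have hml2 : 2 * m ≤ ℓ * m := Nat.mul_le_mul_right m hℓ
  have hlm : ℓ + m ≤ ℓ * m := by omega
  have hlm4 : 4 ≤ ℓ * m := by omega
  have h2lm : 2 * ℓ * m = 2 * (ℓ * m) := by ring
  have hfin : n + 5 ≤ 2 * (ℓ * m) := by omega
  have hexp : n + 1 ≤ 2 * ℓ * m - 4 := by omega
  have hpow : 2 ^ (n + 1) ≤ 2 ^ (2 * ℓ * m - 4) :=
    Nat.pow_le_pow_right (by norm_num) hexp
  omega
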